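/- Let A be a finite set, φ an endomorphism of the free group F(A), and let n < m be non-negative integers. Then the rank of the image subgroup of φ^n equals the rank of the image subgroup of φ^m if and only if the restriction of φ to the image of φ^n is injective (i.e., every element x in the image of φ^n with φ(x) = 1 satisfies x = 1). -/

import Mathlib

noncomputable def subgroupRank {G : Type*} [Group G] (H : Subgroup G) : ℕ :=
  sInf {n : ℕ | ∃ S : Finset G, S.card = n ∧ Subgroup.closure (S : Set G) = H}

lemma closure_map_val {G : Type*} [Group G] (H : Subgroup G) (T : Finset H) :
    Subgroup.closure ((T.map ⟨Subtype.val, Subtype.coe_injective⟩ : Finset G) : Set G)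
      = Subgroup.map H.subtype (Subgroup.closure (T : Set H)) := by
  rw [MonoidHom.map_closure]
  congr 1
  ext g
  simp [Subgroup.coe_subtype]

lemma subgroupRank_eq_rank {G : Type*} [Group G] (H : Subgroup G) [Group.FG H] :
    subgroupRank H = Group.rank H := by
  classical
  have key : ∀ T : Finset H, Subgroup.closure (T : Set H) = ⊤ →
      ∃ S : Finset G, S.card = T.card ∧ Subgroup.closure (S : Set G) = H := by
    intro T hT
    refine ⟨T.map ⟨Subtype.val, Subtype.coe_injective⟩, Finset.card_map _, ?_⟩
    rw [closure_map_val, hT, ← MonoidHom.range_eq_map, Subgroup.range_subtype]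
  have hne : {n : ℕ | ∃ S : Finset G, S.card = n ∧ Subgroup.closure (S : Set G) = H}.Nonempty := by
    obtain ⟨T, hTcard, hTtop⟩ := Group.rank_spec (↥H)
    obtain ⟨S, h1, h2⟩ := key T hTtop
    exact ⟨S.card, S, rfl, h2⟩
  apply le_antisymm
  · obtain ⟨T, hTcard, hTtop⟩ := Group.rank_spec (↥H)
    obtain ⟨S, h1, h2⟩ := key T hTtop
    exact Nat.sInf_le ⟨S, by rw [h1, hTcard], h2⟩
  · obtain ⟨S, hScard, hSH⟩ := Nat.sInf_mem hne
    have hSsub : ∀ s ∈ S, s ∈ H := fun s hs => hSH ▸ Subgroup.subset_closure hs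
    set T : Finset H := S.attach.image (fun s => (⟨s.1, hSsub s.1 s.2⟩ : H)) with hT
    have hTcard : T.card ≤ S.card := by
      rw [hT]
      exact (Finset.card_image_le).trans (le_of_eq S.card_attach)
    have hTim : (T.map ⟨Subtype.val, Subtype.coe_injective⟩ : Finset G) = S := by
      ext g
      simp only [hT, Finset.mem_map, Finset.mem_image, Finset.mem_attach, true_and,
        Function.Embedding.coeFn_mk, Subtype.exists]
      constructor
      · rintro ⟨h, hmem, ⟨s, hs, hrfl⟩, rfl⟩
        obtain rfl : s = h := congrArg Subtype.val hrfl
        exact hs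
      · intro hg; exact ⟨g, hSsub g hg, ⟨g, hg, rfl⟩, rfl⟩
    have hTtop : Subgroup.closure (T : Set H) = ⊤ := by
      apply Subgroup.map_injective H.subtype_injective
      rw [← closure_map_val, hTim, hSH, ← MonoidHom.range_eq_map, Subgroup.range_subtype]
    calc Group.rank H ≤ T.card := Group.rank_le hTtop
      _ ≤ S.card := hTcard
      _ = _ := hScard


section ResFin

attribute [local instance] Classical.propDecidable

variable {A : Type}

/-- A word is reduced in the indexing sense: no adjacent cancelling pair. -/
def NoCancel (L : List (A × Bool)) : Prop :=
  ∀ j a bb, L[j]? = some (a, bb) → L[j+1]? ≠ some (a, !bb)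

variable (L : List (A × Bool))

/-- `i` is a source for the partial move of generator `a`. -/
def Src (a : A) (i : ℕ) : Prop :=
  (i < L.length ∧ L[L.length-1-i]? = some (a, true)) ∨
  (0 < i ∧ L[L.length-i]? = some (a, false))

/-- `i` is a destination for the partial move of generator `a`. -/
def Dst (a : A) (i : ℕ) : Prop :=
  (0 < i ∧ L[L.length-i]? = some (a, true)) ∨
  (i < L.length ∧ L[L.length-1-i]? = some (a, false))

lemma src_not_both (hred : NoCancel L) (a : A) (i : ℕ)
    (h1 : i < L.length ∧ L[L.length-1-i]? = some (a, true)) :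
    ¬ (0 < i ∧ L[L.length-i]? = some (a, false)) := by
  rintro ⟨hi, hL2⟩
  have harith : L.length - 1 - i + 1 = L.length - i := by omega
  exact hred (L.length-1-i) a true h1.2 (by rw [harith]; simpa using hL2)

lemma dst_not_both (hred : NoCancel L) (a : A) (i : ℕ)
    (h1 : 0 < i ∧ L[L.length-i]? = some (a, true)) :
    ¬ (i < L.length ∧ L[L.length-1-i]? = some (a, false)) := by
  rintro ⟨hi, hL2⟩
  have harith : L.length - 1 - i + 1 = L.length - i := by omega
  exact hred (L.length-1-i) a false hL2 (by rw [harith]; simpa using h1.2)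

variable (hred : NoCancel L)

/-- The partial bijection associated to the moves of generator `a`. -/
noncomputable def moveEquiv (a : A) :
    {i : Fin (L.length+1) // Src L a i.val} ≃ {i : Fin (L.length+1) // Dst L a i.val} where
  toFun := fun p =>
    if h1 : p.1.val < L.length ∧ L[L.length-1-p.1.val]? = some (a, true) then
      ⟨⟨p.1.val+1, by omega⟩, show Dst L a (p.1.val+1) from Or.inl ⟨by omega, by
        have h : L.length - (p.1.val+1) = L.length - 1 - p.1.val := by omega
        rw [h]; exact h1.2⟩⟩
    else
      have h2 := p.2.resolve_left h1
      ⟨⟨p.1.val-1, by omega⟩, show Dst L a (p.1.val-1) from Or.inr ⟨by omega, by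
        have h : L.length - 1 - (p.1.val-1) = L.length - p.1.val := by omega
        rw [h]; exact h2.2⟩⟩
  invFun := fun p =>
    if h1 : 0 < p.1.val ∧ L[L.length-p.1.val]? = some (a, true) then
      ⟨⟨p.1.val-1, by omega⟩, show Src L a (p.1.val-1) from Or.inl ⟨by
          have hb := p.1.isLt
          omega, by
        have h : L.length - 1 - (p.1.val-1) = L.length - p.1.val := by omega
        rw [h]; exact h1.2⟩⟩
    else
      have h2 := p.2.resolve_left h1
      ⟨⟨p.1.val+1, by omega⟩, show Src L a (p.1.val+1) from Or.inr ⟨by omega, by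
        have h : L.length - (p.1.val+1) = L.length - 1 - p.1.val := by omega
        rw [h]; exact h2.2⟩⟩
  left_inv := by
    rintro ⟨i, hi⟩
    by_cases h1 : i.val < L.length ∧ L[L.length-1-i.val]? = some (a, true)
    · simp only [dif_pos h1]
      have hc : 0 < (i.val+1) ∧ L[L.length-(i.val+1)]? = some (a, true) := by
        refine ⟨by omega, ?_⟩
        have : L.length - (i.val+1) = L.length - 1 - i.val := by omega
        rw [this]; exact h1.2
      simp only [dif_pos hc]
      exact Subtype.ext (Fin.ext (by simp))
    · have h2 := hi.resolve_left h1
      simp only [dif_neg h1]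
      have hc : ¬ (0 < (i.val-1) ∧ L[L.length-(i.val-1)]? = some (a, true)) := by
        intro hcc
        have harw : L.length - 1 - (i.val - 1) = L.length - i.val := by omega
        exact dst_not_both L hred a (i.val-1) hcc ⟨by omega, by rw [harw]; exact h2.2⟩
      simp only [dif_neg hc]
      exact Subtype.ext (Fin.ext (by simp; omega))
  right_inv := by
    rintro ⟨i, hi⟩
    by_cases h1 : 0 < i.val ∧ L[L.length-i.val]? = some (a, true)
    · simp only [dif_pos h1]
      have hc : (i.val-1) < L.length ∧ L[L.length-1-(i.val-1)]? = some (a, true) := by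
        refine ⟨by omega, ?_⟩
        have : L.length - 1 - (i.val-1) = L.length - i.val := by omega
        rw [this]; exact h1.2
      simp only [dif_pos hc]
      exact Subtype.ext (Fin.ext (by simp; omega))
    · have h2 := hi.resolve_left h1
      simp only [dif_neg h1]
      have hc : ¬ ((i.val+1) < L.length ∧ L[L.length-1-(i.val+1)]? = some (a, true)) := by
        intro hcc
        have harw : L.length - (i.val + 1) = L.length - 1 - i.val := by omega
        exact src_not_both L hred a (i.val+1) hcc ⟨by omega, by rw [harw]; exact h2.2⟩
      simp only [dif_neg hc]
      exact Subtype.ext (Fin.ext (by simp))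

/-- The permutation of `Fin (L.length + 1)` associated to the generator `a`. -/
noncomputable def movePerm (a : A) : Equiv.Perm (Fin (L.length + 1)) :=
  (moveEquiv L hred a).extendSubtype

lemma movePerm_of_src (a : A) (i : Fin (L.length+1)) (h : Src L a i.val) :
    movePerm L hred a i = ((moveEquiv L hred a) ⟨i, h⟩ : {i : Fin (L.length+1) // Dst L a i.val}) :=
  Equiv.extendSubtype_apply_of_mem _ i h

lemma movePerm_step_true (a : A) (j : ℕ) (hj : j < L.length)
    (hL : L[j]? = some (a, true)) :
    movePerm L hred a ⟨L.length-1-j, by omega⟩ = ⟨L.length-j, by omega⟩ := by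
  have hsrc1 : (L.length-1-j : ℕ) < L.length ∧
      L[L.length-1-(L.length-1-j)]? = some (a, true) := by
    refine ⟨by omega, ?_⟩
    have h : L.length-1-(L.length-1-j) = j := by omega
    rw [h]; exact hL
  rw [movePerm_of_src L hred a _ (Or.inl hsrc1)]
  simp only [moveEquiv, Equiv.coe_fn_mk]
  rw [dif_pos hsrc1]
  exact Fin.ext (by simp; omega)

lemma movePerm_step_false (a : A) (j : ℕ) (hj : j < L.length)
    (hL : L[j]? = some (a, false)) :
    (movePerm L hred a)⁻¹ ⟨L.length-1-j, by omega⟩ = ⟨L.length-j, by omega⟩ := by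
  have hsrc2 : 0 < (L.length-j : ℕ) ∧ L[L.length-(L.length-j)]? = some (a, false) := by
    refine ⟨by omega, ?_⟩
    have h : L.length-(L.length-j) = j := by omega
    rw [h]; exact hL
  have hmain : movePerm L hred a ⟨L.length-j, by omega⟩ = ⟨L.length-1-j, by omega⟩ := by
    rw [movePerm_of_src L hred a _ (Or.inr hsrc2)]
    simp only [moveEquiv, Equiv.coe_fn_mk]
    have hnot1 : ¬ ((L.length-j : ℕ) < L.length ∧
        L[L.length-1-(L.length-j)]? = some (a, true)) := by
      intro hc
      exact src_not_both L hred a (L.length-j) hc hsrc2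
    rw [dif_neg hnot1]
    exact Fin.ext (by simp; omega)
  rw [← hmain]
  simp

/-- The action of a letter. -/
noncomputable def letterPerm (c : A × Bool) : Equiv.Perm (Fin (L.length + 1)) :=
  cond c.2 (movePerm L hred c.1) (movePerm L hred c.1)⁻¹

lemma letterPerm_step (j : ℕ) (hj : j < L.length) (c : A × Bool) (hL : L[j]? = some c) :
    letterPerm L hred c ⟨L.length-1-j, by omega⟩ = ⟨L.length-j, by omega⟩ := by
  obtain ⟨a, bb⟩ := c
  cases bb
  · exact movePerm_step_false L hred a j hj hL
  · exact movePerm_step_true L hred a j hj hL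

lemma suffix_prod (M : List (A × Bool)) (hM : M <:+ L) :
    ((M.map (letterPerm L hred)).prod) ⟨0, by omega⟩ = ⟨M.length, by
      have := hM.length_le; omega⟩ := by
  induction M with
  | nil => simp
  | cons c M' ih =>
    have hM' : M' <:+ L := ((List.suffix_cons c M').trans hM)
    have hlen : M'.length + 1 ≤ L.length := by
      have := hM.length_le; simpa using this
    obtain ⟨T, hT⟩ := hM
    have hj : T.length = L.length - 1 - M'.length := by
      have : T.length + (M'.length + 1) = L.length := by
        rw [← hT]; simp
      omega
    have hgot : L[T.length]? = some c := by
      rw [← hT]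
      rw [List.getElem?_append_right (le_refl _)]
      simp
    simp only [List.map_cons, List.prod_cons, Equiv.Perm.mul_apply]
    rw [ih hM']
    have h1 : (⟨M'.length, by omega⟩ : Fin (L.length+1))
        = ⟨L.length - 1 - T.length, by omega⟩ := Fin.ext (by simp only [Fin.val_mk]; omega)
    have h2 := letterPerm_step L hred T.length (by omega) c hgot
    rw [h1, h2]
    exact Fin.ext (by simp only [List.length_cons, Fin.val_mk]; omega)

end ResFin

/-- Free groups are residually finite, in the weak form needed here: any nontrivial element
is detected by a homomorphism to a finite group. -/
lemma freeGroup_detect {A : Type} (x : FreeGroup A) (hx : x ≠ 1) :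
    ∃ (N : ℕ) (g : FreeGroup A →* Equiv.Perm (Fin (N + 1))), g x ≠ 1 := by
  classical
  set L := x.toWord with hLdef
  have hred : NoCancel L := by
    intro j a bb hj hj1
    have hdecomp : L = L.take j ++ (a, bb) :: (a, !bb) :: L.drop (j+2) := by
      have hjlt : j < L.length := (List.getElem?_eq_some_iff.mp hj).1
      have hj1lt : j + 1 < L.length := (List.getElem?_eq_some_iff.mp hj1).1
      obtain ⟨hh1, he1⟩ := List.getElem?_eq_some_iff.mp hj
      obtain ⟨hh2, he2⟩ := List.getElem?_eq_some_iff.mp hj1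
      have hdrop : L.drop j = (a, bb) :: (a, !bb) :: L.drop (j+2) := by
        rw [List.drop_eq_getElem_cons hjlt, List.drop_eq_getElem_cons hj1lt, he1, he2]
      conv_lhs => rw [← List.take_append_drop j L, hdrop]
    have hLred : FreeGroup.reduce L = L := FreeGroup.reduce_toWord x
    exact FreeGroup.reduce.not (p := False) (by rw [hLred]; exact hdecomp)
  have hLne : L ≠ [] := fun h => hx (FreeGroup.toWord_eq_nil_iff.mp h)
  have hn : 0 < L.length := List.length_pos_iff.mpr hLne
  refine ⟨L.length, FreeGroup.lift (fun a => movePerm L hred a), ?_⟩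
  intro hcontra
  have heval : FreeGroup.lift (fun a => movePerm L hred a) x
      = ((L.map (letterPerm L hred)).prod) := by
    conv_lhs => rw [← FreeGroup.mk_toWord (x := x)]
    rw [FreeGroup.lift_mk]
    congr 1
  have happ := suffix_prod L hred L (List.suffix_refl L)
  rw [← heval, hcontra] at happ
  have : (0 : ℕ) = L.length := congrArg Fin.val happ
  omega


lemma monoidHom_finite {G Q : Type*} [Group G] [Group Q] [Group.FG G] [Finite Q] :
    Finite (G →* Q) := by
  classical
  obtain ⟨S, -, hStop⟩ := Group.rank_spec G
  have : Finite ((S : Set G)) := S.finite_toSet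
  refine Finite.of_injective (fun h => (fun s : (S : Set G) => h s)) ?_
  intro h₁ h₂ hh
  refine MonoidHom.eq_of_eqOn_dense hStop ?_
  intro s hs
  exact congrFun hh ⟨s, hs⟩

lemma malcev {G : Type*} [Group G] [Group.FG G] (f : G →* G)
    (hf : Function.Surjective f) (y : G) (hy : f y = 1)
    (Q : Type*) [Group Q] [Finite Q] (g : G →* Q) (hg : g y ≠ 1) : False := by
  haveI : Finite (G →* Q) := monoidHom_finite
  have hinj : Function.Injective (fun h : G →* Q => h.comp f) := by
    intro h₁ h₂ hh
    exact (MonoidHom.cancel_right hf).mp hh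
  obtain ⟨h, hh⟩ := (Finite.injective_iff_surjective.mp hinj) g
  apply hg
  have : g y = h (f y) := by rw [← hh]; rfl
  rw [this, hy, map_one]


section RankBasis

variable {G : Type*} [Group G] {ι : Type*}

lemma freeGroupBasis_closure_range (b : FreeGroupBasis ι G) :
    Subgroup.closure (Set.range b) = ⊤ := by
  have h1 : Subgroup.map b.repr.symm.toMonoidHom
      (Subgroup.closure (Set.range (FreeGroup.of : ι → FreeGroup ι))) = ⊤ := by
    rw [FreeGroup.closure_range_of, Subgroup.map_top_of_surjective _ b.repr.symm.surjective]
  rw [MonoidHom.map_closure, ← Set.range_comp] at h1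
  exact h1

/-- The mod-2 abelianization homomorphism associated to a free group basis. -/
noncomputable def mod2Hom (b : FreeGroupBasis ι G) :
    G →* Multiplicative (ι →₀ ZMod 2) :=
  b.lift (fun i => Multiplicative.ofAdd (Finsupp.single i 1))

lemma mod2Hom_basis (b : FreeGroupBasis ι G) (i : ι) :
    mod2Hom b (b i) = Multiplicative.ofAdd (Finsupp.single i 1) := by
  simp [mod2Hom, FreeGroupBasis.lift]

lemma mod2Hom_surjective (b : FreeGroupBasis ι G) :
    Function.Surjective (mod2Hom b) := by
  have key : ∀ v : ι →₀ ZMod 2, Multiplicative.ofAdd v ∈ (mod2Hom b).range := by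
    intro v
    induction v using Finsupp.induction with
    | zero => exact one_mem _
    | single_add a c f _ _ ih =>
      have h1 : Multiplicative.ofAdd ((Finsupp.single a c) + f)
          = Multiplicative.ofAdd (Finsupp.single a c) * Multiplicative.ofAdd f := rfl
      rw [h1]
      refine mul_mem ?_ ih
      have : Multiplicative.ofAdd (Finsupp.single a c) = (mod2Hom b (b a)) ^ c.val := by
        rw [mod2Hom_basis, ← ofAdd_nsmul]
        congr 1
        rw [Finsupp.smul_single, nsmul_eq_mul, mul_one, ZMod.natCast_val, ZMod.cast_id]
      rw [this]
      exact pow_mem (MonoidHom.mem_range.mpr ⟨b a, rfl⟩) c.val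
  intro w
  obtain ⟨x, hx⟩ := key (Multiplicative.toAdd w)
  exact ⟨x, hx⟩

lemma card_le_of_closure_eq_top (b : FreeGroupBasis ι G) (S : Finset G)
    (hS : Subgroup.closure (S : Set G) = ⊤) : Finite ι ∧ Nat.card ι ≤ S.card := by
  classical
  have : Fact (Nat.Prime 2) := ⟨Nat.prime_two⟩
  set V := (ι →₀ ZMod 2) with hV
  set g := mod2Hom b with hg
  set T : Finset V := S.image (fun s => Multiplicative.toAdd (g s)) with hT
  have key : ∀ x ∈ Subgroup.closure ((fun s => g s) '' (S : Set G)),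
      Multiplicative.toAdd x ∈ Submodule.span (ZMod 2) (T : Set V) := by
    intro x hx
    refine Subgroup.closure_induction ?_ ?_ ?_ ?_ hx
    · rintro y ⟨s, hs, rfl⟩
      exact Submodule.subset_span
        (Finset.mem_coe.mpr (Finset.mem_image_of_mem (fun s => Multiplicative.toAdd (g s)) hs))
    · exact Submodule.zero_mem _
    · intro y z _ _ hy hz
      exact Submodule.add_mem _ hy hz
    · intro y _ hy
      exact Submodule.neg_mem _ hy
  have hspan : Submodule.span (ZMod 2) (T : Set V) = ⊤ := by
    rw [eq_top_iff]
    intro v _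
    have hv : Multiplicative.ofAdd v ∈ Subgroup.closure ((fun s => g s) '' (S : Set G)) := by
      rw [← MonoidHom.map_closure, hS, Subgroup.map_top_of_surjective _ (mod2Hom_surjective b)]
      trivial
    exact key _ hv
  have hfin : Module.Finite (ZMod 2) V := ⟨⟨T, hspan⟩⟩
  have hfinite : Finite ι := Module.Finite.finite_basis (Finsupp.basisSingleOne (R := ZMod 2))
  refine ⟨hfinite, ?_⟩
  have : Fintype ι := Fintype.ofFinite ι
  have hrank : Module.finrank (ZMod 2) V = Nat.card ι := by
    rw [Module.finrank_eq_card_basis (Finsupp.basisSingleOne (R := ZMod 2)),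
      Nat.card_eq_fintype_card]
  have hle : Module.finrank (ZMod 2) V ≤ T.card := by
    have h2 := finrank_span_le_card (R := ZMod 2) (M := V) (T : Set V)
    rw [hspan, finrank_top] at h2
    simpa using h2
  exact hrank ▸ hle.trans (Finset.card_image_le)

lemma freeRank_eq_card_basis [Group.FG G] (b : FreeGroupBasis ι G) :
    Finite ι ∧ Group.rank G = Nat.card ι := by
  classical
  obtain ⟨S, hcard, htop⟩ := Group.rank_spec G
  obtain ⟨hfin, hle⟩ := card_le_of_closure_eq_top b S htop
  refine ⟨hfin, le_antisymm ?_ (hcard ▸ hle)⟩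
  have : Fintype ι := Fintype.ofFinite ι
  have hclos : Subgroup.closure ((Finset.univ.image b : Finset G) : Set G) = ⊤ := by
    rw [Finset.coe_image, Finset.coe_univ, Set.image_univ, freeGroupBasis_closure_range]
  calc Group.rank G ≤ (Finset.univ.image b).card := Group.rank_le hclos
    _ ≤ Finset.univ.card := Finset.card_image_le
    _ = Nat.card ι := by rw [Finset.card_univ, Nat.card_eq_fintype_card]

lemma iso_of_rank_eq {H : Type*} [Group H] [Group.FG G] [Group.FG H]
    [IsFreeGroup G] [IsFreeGroup H] (h : Group.rank G = Group.rank H) :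
    Nonempty (G ≃* H) := by
  obtain ⟨hfinG, hG⟩ := freeRank_eq_card_basis (IsFreeGroup.basis G)
  obtain ⟨hfinH, hH⟩ := freeRank_eq_card_basis (IsFreeGroup.basis H)
  haveI := hfinG
  haveI := hfinH
  have hcard : Nat.card (IsFreeGroup.Generators G) = Nat.card (IsFreeGroup.Generators H) := by
    rw [← hG, ← hH, h]
  obtain ⟨e⟩ := Finite.card_eq.mp hcard
  exact ⟨(IsFreeGroup.toFreeGroup G).trans
    ((FreeGroup.freeGroupCongr e).trans (IsFreeGroup.toFreeGroup H).symm)⟩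

end RankBasis


section Chain
variable {A : Type} [Finite A] (φ : Monoid.End (FreeGroup A))

instance FreeGroup.fgOfFinite : Group.FG (FreeGroup A) := by
  have := Fintype.ofFinite A
  rw [Group.fg_iff]
  exact ⟨Set.range FreeGroup.of, FreeGroup.closure_range_of A, Set.finite_range _⟩

omit [Finite A] in
lemma end_mul_apply (f g : Monoid.End (FreeGroup A)) (x : FreeGroup A) :
    (f * g) x = f (g x) := rfl

lemma range_pow_antitone {k l : ℕ} (h : k ≤ l) :
    MonoidHom.range (φ ^ l) ≤ MonoidHom.range (φ ^ k) := by
  rintro x ⟨y, rfl⟩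
  refine ⟨(φ ^ (l - k)) y, ?_⟩
  exact (end_mul_apply _ _ y).symm.trans (by rw [← pow_add, Nat.add_sub_cancel' h]; rfl)

/-- The restriction of `φ` as a map from the image of `φ^k` to the image of `φ^(k+1)`. -/
noncomputable def resHom (k : ℕ) :
    MonoidHom.range (φ ^ k) →* MonoidHom.range (φ ^ (k + 1)) :=
  MonoidHom.codRestrict ((φ : FreeGroup A →* FreeGroup A).comp
    (MonoidHom.range (φ ^ k)).subtype) _ (by
      rintro ⟨x, y, rfl⟩
      exact ⟨y, by rw [pow_succ']; rfl⟩)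

lemma resHom_apply (k : ℕ) (x : MonoidHom.range (φ ^ k)) :
    ((resHom φ k x : FreeGroup A)) = φ (x : FreeGroup A) := rfl

lemma resHom_surjective (k : ℕ) : Function.Surjective (resHom φ k) := by
  rintro ⟨x, y, rfl⟩
  refine ⟨⟨(φ ^ k) y, ⟨y, rfl⟩⟩, ?_⟩
  apply Subtype.ext
  show φ ((φ ^ k) y) = (φ ^ (k+1)) y
  rw [pow_succ', end_mul_apply]

lemma rank_range_pow_antitone {k l : ℕ} (h : k ≤ l) :
    Group.rank (MonoidHom.range (φ ^ l)) ≤ Group.rank (MonoidHom.range (φ ^ k)) := by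
  induction l with
  | zero => rw [Nat.le_zero.mp h]
  | succ l ih =>
    rcases Nat.lt_or_ge k (l+1) with hk | hk
    · exact le_trans (Group.rank_le_of_surjective _ (resHom_surjective φ l))
        (ih (Nat.lt_succ_iff.mp hk))
    · have : k = l + 1 := le_antisymm h hk
      subst this; rfl

lemma resHom_injective (k : ℕ) {n : ℕ} (hk : n ≤ k)
    (hinj : ∀ x ∈ MonoidHom.range (φ ^ n), φ x = 1 → x = 1) :
    Function.Injective (resHom φ k) := by
  rw [injective_iff_map_eq_one]
  rintro ⟨x, hx⟩ hx1
  have : φ x = 1 := congrArg Subtype.val hx1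
  have hxn : x ∈ MonoidHom.range (φ ^ n) := range_pow_antitone φ hk hx
  exact Subtype.ext (hinj x hxn this)

lemma rank_eq_of_inj {n : ℕ} (hinj : ∀ x ∈ MonoidHom.range (φ ^ n), φ x = 1 → x = 1)
    {k : ℕ} (hk : n ≤ k) :
    Group.rank (MonoidHom.range (φ ^ k)) = Group.rank (MonoidHom.range (φ ^ n)) := by
  induction k with
  | zero => rw [Nat.le_zero.mp hk]
  | succ k ih =>
    rcases Nat.lt_or_ge n (k+1) with hk' | hk'
    · have hnk : n ≤ k := Nat.lt_succ_iff.mp hk'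
      rw [← ih hnk]
      exact (Group.rank_congr
        (MulEquiv.ofBijective _ ⟨resHom_injective φ k hnk hinj, resHom_surjective φ k⟩)).symm
    · rw [le_antisymm hk hk']

end Chain


/-- For an endomorphism `φ` of a free group of finite rank and `n < m`, the images of `φ^n`
and `φ^m` are free groups of the same rank if and only if the restriction of `φ` to the
image of `φ^n` is injective. -/
theorem rank_image_pow_eq_iff_restriction_injective {A : Type} [Finite A]
    (φ : Monoid.End (FreeGroup A)) (n m : ℕ) (hnm : n < m) :
    subgroupRank (MonoidHom.range (φ ^ n)) = subgroupRank (MonoidHom.range (φ ^ m)) ↔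
      ∀ x ∈ MonoidHom.range (φ ^ n), φ x = 1 → x = 1 := by
  constructor
  · intro h
    by_contra hni
    push_neg at hni
    obtain ⟨x, hxmem, hφx, hxne⟩ := hni
    rw [subgroupRank_eq_rank, subgroupRank_eq_rank] at h
    have h1 : Group.rank (MonoidHom.range (φ ^ m)) ≤ Group.rank (MonoidHom.range (φ ^ (n+1))) :=
      rank_range_pow_antitone φ hnm
    have h2 : Group.rank (MonoidHom.range (φ ^ (n+1))) ≤ Group.rank (MonoidHom.range (φ ^ n)) :=
      rank_range_pow_antitone φ (Nat.le_succ n)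
    have heq : Group.rank (MonoidHom.range (φ ^ (n+1))) = Group.rank (MonoidHom.range (φ ^ n)) :=
      le_antisymm h2 (le_trans (le_of_eq h) h1)
    obtain ⟨e⟩ := iso_of_rank_eq heq
    set θ : MonoidHom.range (φ ^ n) →* MonoidHom.range (φ ^ n) :=
      e.toMonoidHom.comp (resHom φ n) with hθ
    have hsurj : Function.Surjective θ := e.surjective.comp (resHom_surjective φ n)
    set y : MonoidHom.range (φ ^ n) := ⟨x, hxmem⟩ with hy
    have hθy : θ y = 1 := by
      have : resHom φ n y = 1 := Subtype.ext hφx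
      rw [hθ, MonoidHom.comp_apply, this, map_one]
    obtain ⟨N, g, hg⟩ := freeGroup_detect x hxne
    have hg' : (g.comp (MonoidHom.range (φ ^ n)).subtype) y ≠ 1 := hg
    exact malcev θ hsurj y hθy _ (g.comp (MonoidHom.range (φ ^ n)).subtype) hg'
  · intro hinj
    rw [subgroupRank_eq_rank, subgroupRank_eq_rank]
    exact (rank_eq_of_inj φ hinj (le_of_lt hnm)).symm
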